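/- arXiv:1601.00513 — 3 statements merged into one kernel-verified Lean document; each statement's English description precedes it below -/
import Mathlib

section
/- If a function f: ℝ → ℝ is of locally bounded variation, i.e. f = α + β with α monotonically increasing and β monotonically decreasing, then there exists a Lipschitz continuous function g: ℝ → ℝ with Lipschitz constant 1 such that f = g ∘ h_f, where h_f := f⁺ − f⁻ with f⁺ the minimal increasing part of f normalized by f⁺(0)=f(0) and f⁻ := f − f⁺. -/
open Set

/-- The canonical increasing part `f⁺` of a function of locally bounded variation,
normalized by `f⁺ 0 = f 0`. -/
noncomputable def fplus (f : ℝ → ℝ) (x : ℝ) : ℝ :=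
  if 0 < x then
    sInf {y | ∃ α : ℝ → ℝ, Monotone α ∧ Antitone (f - α) ∧ α 0 = f 0 ∧ y = α x}
  else if x = 0 then f 0
  else
    sSup {y | ∃ α : ℝ → ℝ, Monotone α ∧ Antitone (f - α) ∧ α 0 = f 0 ∧ y = α x}

/-- `f⁻ := f - f⁺`. -/
noncomputable def fminus (f : ℝ → ℝ) (x : ℝ) : ℝ := f x - fplus f x

/-- `h_f := f⁺ - f⁻`. -/
noncomputable def hBV (f : ℝ → ℝ) (x : ℝ) : ℝ := fplus f x - fminus f x

section aux

variable {f : ℝ → ℝ}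

/-- The set used in the definition of `fplus`. -/
def Sset (f : ℝ → ℝ) (x : ℝ) : Set ℝ :=
  {y | ∃ α : ℝ → ℝ, Monotone α ∧ Antitone (f - α) ∧ α 0 = f 0 ∧ y = α x}

/-- Admissibility predicate. -/
def Adm (f α : ℝ → ℝ) : Prop := Monotone α ∧ Antitone (f - α) ∧ α 0 = f 0

lemma mem_Sset {α : ℝ → ℝ} (hα : Adm f α) (x : ℝ) : α x ∈ Sset f x :=
  ⟨α, hα.1, hα.2.1, hα.2.2, rfl⟩

lemma Adm.le_apply {α : ℝ → ℝ} (hα : Adm f α) {x : ℝ} (hx : 0 ≤ x) :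
    f 0 ≤ α x ∧ f x ≤ α x := by
  have h1 := hα.1 hx
  have h2 := hα.2.1 hx
  simp only [Pi.sub_apply] at h2
  constructor <;> linarith [hα.2.2]

lemma Adm.apply_le {α : ℝ → ℝ} (hα : Adm f α) {x : ℝ} (hx : x ≤ 0) :
    α x ≤ f 0 ∧ α x ≤ f x := by
  have h1 := hα.1 hx
  have h2 := hα.2.1 hx
  simp only [Pi.sub_apply] at h2
  constructor <;> linarith [hα.2.2]

lemma Sset_nonempty {α₀ : ℝ → ℝ} (hα₀ : Adm f α₀) (x : ℝ) : (Sset f x).Nonempty :=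
  ⟨α₀ x, mem_Sset hα₀ x⟩

lemma Sset_bddBelow {x : ℝ} (hx : 0 ≤ x) : BddBelow (Sset f x) := by
  refine ⟨f 0, fun b hb => ?_⟩
  obtain ⟨α, h1, h2, h3, rfl⟩ := hb
  exact (Adm.le_apply ⟨h1, h2, h3⟩ hx).1

lemma Sset_bddAbove {x : ℝ} (hx : x ≤ 0) : BddAbove (Sset f x) := by
  refine ⟨f 0, fun b hb => ?_⟩
  obtain ⟨α, h1, h2, h3, rfl⟩ := hb
  exact (Adm.apply_le ⟨h1, h2, h3⟩ hx).1

lemma fplus_pos {x : ℝ} (hx : 0 < x) : fplus f x = sInf (Sset f x) := by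
  simp [fplus, hx, Sset]

lemma fplus_zero : fplus f 0 = f 0 := by simp [fplus]

lemma fplus_neg {x : ℝ} (hx : x < 0) : fplus f x = sSup (Sset f x) := by
  simp [fplus, not_lt.2 hx.le, hx.ne, Sset]

/-- Unified lemma: if every admissible `α` satisfies `α x + c ≤ α y`, and in the
crossing case there is a uniform separating value `m`, then `fplus f x + c ≤ fplus f y`. -/
lemma fplus_add_le {α₀ : ℝ → ℝ} (hα₀ : Adm f α₀) {x y c m : ℝ} (hxy : x ≤ y)
    (hc : ∀ α : ℝ → ℝ, Adm f α → α x + c ≤ α y)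
    (hm : x < 0 → 0 < y → ∀ α : ℝ → ℝ, Adm f α → α x + c ≤ m ∧ m ≤ α y) :
    fplus f x + c ≤ fplus f y := by
  rcases lt_trichotomy 0 x with hx | hx | hx
  · have hy : 0 < y := lt_of_lt_of_le hx hxy
    rw [fplus_pos hx, fplus_pos hy]
    refine le_csInf (Sset_nonempty hα₀ y) ?_
    rintro b ⟨α, h1, h2, h3, rfl⟩
    have := csInf_le (Sset_bddBelow hx.le) (mem_Sset ⟨h1, h2, h3⟩ x)
    have := hc α ⟨h1, h2, h3⟩
    linarith
  · subst hx
    rw [fplus_zero]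
    rcases lt_or_eq_of_le hxy with hy | hy
    · rw [fplus_pos hy]
      refine le_csInf (Sset_nonempty hα₀ y) ?_
      rintro b ⟨α, h1, h2, h3, rfl⟩
      have := hc α ⟨h1, h2, h3⟩
      rw [h3] at this
      linarith
    · rw [← hy, fplus_zero]
      have := hc α₀ hα₀
      rw [← hy] at this
      linarith
  · rw [fplus_neg hx]
    rcases lt_trichotomy 0 y with hy | hy | hy
    · rw [fplus_pos hy]
      have h1 : sSup (Sset f x) ≤ m - c := by
        refine csSup_le (Sset_nonempty hα₀ x) ?_
        rintro b ⟨α, h1, h2, h3, rfl⟩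
        have := (hm hx hy α ⟨h1, h2, h3⟩).1
        linarith
      have h2 : m ≤ sInf (Sset f y) := by
        refine le_csInf (Sset_nonempty hα₀ y) ?_
        rintro b ⟨α, h1, h2, h3, rfl⟩
        exact (hm hx hy α ⟨h1, h2, h3⟩).2
      linarith
    · rw [← hy, fplus_zero]
      have : sSup (Sset f x) ≤ f 0 - c := by
        refine csSup_le (Sset_nonempty hα₀ x) ?_
        rintro b ⟨α, h1, h2, h3, rfl⟩
        have := hc α ⟨h1, h2, h3⟩
        rw [← hy] at this
        rw [h3] at this
        linarith
      linarith
    · rw [fplus_neg hy]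
      have : sSup (Sset f x) ≤ sSup (Sset f y) - c := by
        refine csSup_le (Sset_nonempty hα₀ x) ?_
        rintro b ⟨α, h1, h2, h3, rfl⟩
        have h4 := le_csSup (Sset_bddAbove hy.le) (mem_Sset ⟨h1, h2, h3⟩ y)
        have := hc α ⟨h1, h2, h3⟩
        linarith
      linarith

lemma fplus_mono {α₀ : ℝ → ℝ} (hα₀ : Adm f α₀) : Monotone (fplus f) := by
  intro x y hxy
  have := fplus_add_le hα₀ (c := 0) (m := f 0) hxy
    (fun α hα => by simpa using hα.1 hxy)
    (fun hx hy α hα => ⟨by simpa using (hα.apply_le hx.le).1, (hα.le_apply hy.le).1⟩)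
  linarith

lemma fplus_anti {α₀ : ℝ → ℝ} (hα₀ : Adm f α₀) {x y : ℝ} (hxy : x ≤ y) :
    f y - f x ≤ fplus f y - fplus f x := by
  have := fplus_add_le hα₀ (c := f y - f x) (m := f y) hxy
    (fun α hα => by
      have := hα.2.1 hxy
      simp only [Pi.sub_apply] at this
      linarith)
    (fun hx hy α hα => ⟨by linarith [(hα.apply_le hx.le).2], (hα.le_apply hy.le).2⟩)
  linarith

end aux

/-- If `f : ℝ → ℝ` is of locally bounded variation (i.e. `f = α + β` with `α`
monotonically increasing and `β` monotonically decreasing), then there is a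
Lipschitz function `g` with Lipschitz constant `1` such that `f = g ∘ h_f`. -/
theorem stmt0 (f : ℝ → ℝ)
    (hBVf : ∃ α β : ℝ → ℝ, Monotone α ∧ Antitone β ∧ f = α + β) :
    ∃ g : ℝ → ℝ, LipschitzWith 1 g ∧ f = g ∘ hBV f := by
  obtain ⟨a, b, ha, hb, hf⟩ := hBVf
  -- normalize the admissible witness
  have hα₀ : Adm f (fun x => a x - a 0 + f 0) := by
    refine ⟨fun u v huv => by simpa using ha huv, ?_, by simp⟩
    intro u v huv
    simp only [Pi.sub_apply, hf, Pi.add_apply]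
    have := hb huv
    linarith
  set h := hBV f with hh
  -- key inequality: f is 1-Lipschitz w.r.t. h
  have key : ∀ x y : ℝ, x ≤ y → |f y - f x| ≤ h y - h x := by
    intro x y hxy
    have h1 : fplus f x ≤ fplus f y := fplus_mono hα₀ hxy
    have h2 : f y - f x ≤ fplus f y - fplus f x := fplus_anti hα₀ hxy
    have hd : h y - h x = (fplus f y - fplus f x) + ((fplus f y - f y) - (fplus f x - f x)) := by
      simp only [hh, hBV, fminus]; ring
    rw [abs_le]
    constructor <;> linarith
  have key' : ∀ x y : ℝ, |f x - f y| ≤ |h x - h y| := by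
    intro x y
    rcases le_total x y with hxy | hxy
    · rw [abs_sub_comm (f x), abs_sub_comm (h x)]
      calc |f y - f x| ≤ h y - h x := key x y hxy
        _ ≤ |h y - h x| := le_abs_self _
    · calc |f x - f y| ≤ h x - h y := key y x hxy
        _ ≤ |h x - h y| := le_abs_self _
  -- build g on the range of h
  set g₀ : ℝ → ℝ := fun t => f (Function.invFun h t) with hg₀
  have hlip : LipschitzOnWith 1 g₀ (Set.range h) := by
    rw [lipschitzOnWith_iff_dist_le_mul]
    rintro s ⟨u, rfl⟩ t ⟨v, rfl⟩
    have hu : h (Function.invFun h (h u)) = h u := Function.invFun_eq ⟨u, rfl⟩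
    have hv : h (Function.invFun h (h v)) = h v := Function.invFun_eq ⟨v, rfl⟩
    simp only [hg₀, NNReal.coe_one, one_mul, Real.dist_eq]
    calc |f (Function.invFun h (h u)) - f (Function.invFun h (h v))|
        ≤ |h (Function.invFun h (h u)) - h (Function.invFun h (h v))| := key' _ _
      _ = |h u - h v| := by rw [hu, hv]
  obtain ⟨g, hg, hgeq⟩ := hlip.extend_real
  refine ⟨g, hg, ?_⟩
  funext x
  have hx : h x ∈ Set.range h := ⟨x, rfl⟩
  have h1 : g (h x) = g₀ (h x) := (hgeq hx).symm
  have h2 : g₀ (h x) = f x := by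
    have hu : h (Function.invFun h (h x)) = h x := Function.invFun_eq ⟨x, rfl⟩
    have := key' (Function.invFun h (h x)) x
    rw [hu, sub_self, abs_zero] at this
    have : f (Function.invFun h (h x)) = f x := by
      have habs := abs_nonneg (f (Function.invFun h (h x)) - f x)
      have := abs_eq_zero.mp (le_antisymm this habs)
      linarith
    simpa [hg₀] using this
  simp [Function.comp, h1, h2]
end

section
/- Every positively associated ℝ^s-valued random field with finite second moments is quasi-associated. -/
open MeasureTheory

/-- `L p` is a coordinate-wise Lipschitz constant of `f` in the coordinate `p`. -/
def CoordLip {ι : Type*} [DecidableEq ι] (L : ι → ℝ) (f : (ι → ℝ) → ℝ) : Prop :=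
  ∀ (p : ι) (x y : ι → ℝ), (∀ q, q ≠ p → x q = y q) → |f x - f y| ≤ L p * |x p - y p|

/-- Covariance of two real random variables. -/
noncomputable def covRV {Ω : Type*} [MeasureSpace Ω] (X Y : Ω → ℝ) : ℝ :=
  (∫ ω, X ω * Y ω) - (∫ ω, X ω) * (∫ ω, Y ω)

/-- Positive association of an `ℝ^s`-valued random field: covariances of bounded,
coordinate-wise increasing test functions are nonnegative. -/
def PA {Ω : Type*} [MeasureSpace Ω] {T : Type*} (s : ℕ)
    (X : T → Ω → Fin s → ℝ) : Prop :=
  ∀ I J : Finset T,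
  ∀ (f : (↥I × Fin s → ℝ) → ℝ) (g : (↥J × Fin s → ℝ) → ℝ),
    (∃ C, ∀ x, |f x| ≤ C) → (∃ C, ∀ x, |g x| ≤ C) → Monotone f → Monotone g →
    0 ≤ covRV (fun ω => f fun p => X p.1.1 ω p.2) (fun ω => g fun p => X p.1.1 ω p.2)

/-- Quasi-association of an `ℝ^s`-valued random field. -/
def QA {Ω : Type*} [MeasureSpace Ω] {T : Type*} [DecidableEq T] (s : ℕ)
    (X : T → Ω → Fin s → ℝ) : Prop :=
  ∀ I J : Finset T,
  ∀ (f : (↥I × Fin s → ℝ) → ℝ) (g : (↥J × Fin s → ℝ) → ℝ),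
  ∀ (Lf : ↥I × Fin s → ℝ) (Lg : ↥J × Fin s → ℝ),
    (∀ p, 0 ≤ Lf p) → (∀ q, 0 ≤ Lg q) → CoordLip Lf f → CoordLip Lg g →
    |covRV (fun ω => f fun p => X p.1.1 ω p.2) (fun ω => g fun p => X p.1.1 ω p.2)| ≤
      ∑ p : ↥I × Fin s, ∑ q : ↥J × Fin s,
        Lf p * Lg q * |covRV (fun ω => X p.1.1 ω p.2) (fun ω => X q.1.1 ω q.2)|

/-! ### Auxiliary lemmas -/

section Telescope
variable {ι : Type*} [Fintype ι] [DecidableEq ι] {L : ι → ℝ} {f : (ι → ℝ) → ℝ}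

/-- A coordinate-wise Lipschitz function is `ℓ¹`-Lipschitz (telescoping). -/
lemma coordLip_abs_le (hf : CoordLip L f) (x y : ι → ℝ) :
    |f x - f y| ≤ ∑ p, L p * |x p - y p| := by
  have key : ∀ S : Finset ι, |f (S.piecewise y x) - f x| ≤ ∑ p ∈ S, L p * |x p - y p| := by
    intro S
    induction S using Finset.induction_on with
    | empty => simp
    | @insert a S ha ih =>
      rw [Finset.piecewise_insert]
      have hstep : |f (Function.update (S.piecewise y x) a (y a)) - f (S.piecewise y x)| ≤
          L a * |x a - y a| := by
        have h := hf a (Function.update (S.piecewise y x) a (y a)) (S.piecewise y x)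
          (fun q hq => Function.update_of_ne hq _ _)
        rw [Function.update_self] at h
        have hza : S.piecewise y x a = x a := Finset.piecewise_eq_of_notMem _ _ _ ha
        rw [hza] at h
        calc |f (Function.update (S.piecewise y x) a (y a)) - f (S.piecewise y x)|
            ≤ L a * |y a - x a| := h
          _ = L a * |x a - y a| := by rw [abs_sub_comm]
      calc |f (Function.update (S.piecewise y x) a (y a)) - f x|
          ≤ |f (Function.update (S.piecewise y x) a (y a)) - f (S.piecewise y x)| +
            |f (S.piecewise y x) - f x| := abs_sub_le _ _ _
        _ ≤ L a * |x a - y a| + ∑ p ∈ S, L p * |x p - y p| := add_le_add hstep ih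
        _ = ∑ p ∈ insert a S, L p * |x p - y p| := by rw [Finset.sum_insert ha]
  have := key Finset.univ
  rwa [Finset.piecewise_univ, abs_sub_comm] at this

/-- Adding the linear functional with the Lipschitz coefficients makes a coordinate-wise
Lipschitz function monotone. -/
lemma coordLip_monotone (hL : ∀ p, 0 ≤ L p) (hf : CoordLip L f) :
    Monotone (fun x => f x + ∑ p, L p * x p) := by
  intro x y hxy
  have h1 : f x - f y ≤ ∑ p, L p * (y p - x p) := by
    calc f x - f y ≤ |f x - f y| := le_abs_self _
      _ ≤ ∑ p, L p * |x p - y p| := coordLip_abs_le hf x y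
      _ = ∑ p, L p * (y p - x p) := by
          refine Finset.sum_congr rfl fun p _ => ?_
          rw [abs_sub_comm, abs_of_nonneg (sub_nonneg.2 (hxy p))]
  have h2 : ∑ p, L p * (y p - x p) = (∑ p, L p * y p) - ∑ p, L p * x p := by
    rw [← Finset.sum_sub_distrib]; exact Finset.sum_congr rfl fun p _ => by ring
  simp only []
  linarith [h1, h2.le, h2.ge]

lemma coordLip_continuous (hL : ∀ p, 0 ≤ L p) (hf : CoordLip L f) : Continuous f := by
  have : LipschitzWith (Real.toNNReal (∑ p, L p)) f := by
    apply LipschitzWith.of_dist_le_mul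
    intro x y
    rw [Real.dist_eq, Real.coe_toNNReal _ (Finset.sum_nonneg fun p _ => hL p)]
    calc |f x - f y| ≤ ∑ p, L p * |x p - y p| := coordLip_abs_le hf x y
      _ ≤ ∑ p, L p * dist x y := by
          refine Finset.sum_le_sum fun p _ => ?_
          refine mul_le_mul_of_nonneg_left ?_ (hL p)
          have h := dist_le_pi_dist x y p
          rwa [Real.dist_eq] at h
      _ = (∑ p, L p) * dist x y := by rw [Finset.sum_mul]
  exact this.continuous
end Telescope

section Cov
variable {Ω : Type*} [MeasureSpace Ω] [IsProbabilityMeasure (volume : Measure Ω)]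

lemma l2_integrable_mul {u v : Ω → ℝ} (hu : MemLp u 2 volume) (hv : MemLp v 2 volume) :
    Integrable (fun ω => u ω * v ω) := by
  have hbd : Integrable (fun ω => (1:ℝ)/2 * (u ω ^ 2 + v ω ^ 2)) :=
    (hu.integrable_sq.add hv.integrable_sq).const_mul (1/2)
  refine Integrable.mono' hbd (hu.aestronglyMeasurable.mul hv.aestronglyMeasurable) ?_
  filter_upwards with ω
  rw [Real.norm_eq_abs]
  refine abs_le.2 ⟨by nlinarith [sq_nonneg (u ω + v ω)], by nlinarith [sq_nonneg (u ω - v ω)]⟩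

lemma l2_integrable {u : Ω → ℝ} (hu : MemLp u 2 volume) : Integrable u :=
  hu.integrable one_le_two

/-- Bilinearity of the covariance. -/
lemma covRV_expand {u u' v v' : Ω → ℝ} (a b c d : ℝ)
    (hu : MemLp u 2 volume) (hu' : MemLp u' 2 volume)
    (hv : MemLp v 2 volume) (hv' : MemLp v' 2 volume) :
    covRV (fun ω => a * u ω + b * u' ω) (fun ω => c * v ω + d * v' ω)
      = a*c * covRV u v + a*d * covRV u v' + b*c * covRV u' v + b*d * covRV u' v' := by
  have hprod : ∀ (w w' : Ω → ℝ), MemLp w 2 volume → MemLp w' 2 volume →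
      Integrable (fun ω => w ω * w' ω) := fun w w' h h' => l2_integrable_mul h h'
  unfold covRV
  have e1 : (fun ω => (a * u ω + b * u' ω) * (c * v ω + d * v' ω))
      = fun ω => a*c * (u ω * v ω) + (a*d * (u ω * v' ω) + (b*c * (u' ω * v ω)
        + b*d * (u' ω * v' ω))) := by funext ω; ring
  have J3 : Integrable (fun ω => b*c * (u' ω * v ω) + b*d * (u' ω * v' ω)) :=
    ((hprod _ _ hu' hv).const_mul _).add ((hprod _ _ hu' hv').const_mul _)
  have J2 : Integrable (fun ω => a*d * (u ω * v' ω) + (b*c * (u' ω * v ω)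
      + b*d * (u' ω * v' ω))) := ((hprod _ _ hu hv').const_mul _).add J3
  have i1 : ∫ ω, (a * u ω + b * u' ω) * (c * v ω + d * v' ω)
      = a*c * (∫ ω, u ω * v ω) + (a*d * (∫ ω, u ω * v' ω) + (b*c * (∫ ω, u' ω * v ω)
        + b*d * (∫ ω, u' ω * v' ω))) := by
    rw [e1]
    rw [integral_add ((hprod _ _ hu hv).const_mul _) J2,
      integral_add ((hprod _ _ hu hv').const_mul _) J3,
      integral_add ((hprod _ _ hu' hv).const_mul _) ((hprod _ _ hu' hv').const_mul _),
      integral_const_mul, integral_const_mul, integral_const_mul, integral_const_mul]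
  have i2 : ∫ ω, (a * u ω + b * u' ω) = a * (∫ ω, u ω) + b * ∫ ω, u' ω := by
    rw [integral_add ((l2_integrable hu).const_mul _) ((l2_integrable hu').const_mul _),
      integral_const_mul, integral_const_mul]
  have i3 : ∫ ω, (c * v ω + d * v' ω) = c * (∫ ω, v ω) + d * ∫ ω, v' ω := by
    rw [integral_add ((l2_integrable hv).const_mul _) ((l2_integrable hv').const_mul _),
      integral_const_mul, integral_const_mul]
  rw [i1, i2, i3]; ring

/-- Bilinearity of the covariance over finite sums. -/
lemma covRV_sum_sum {ι κ : Type*} [Fintype ι] [Fintype κ] (A : ι → ℝ) (B : κ → ℝ)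
    (U : ι → Ω → ℝ) (V : κ → Ω → ℝ)
    (hU : ∀ p, MemLp (U p) 2 volume) (hV : ∀ q, MemLp (V q) 2 volume) :
    covRV (fun ω => ∑ p, A p * U p ω) (fun ω => ∑ q, B q * V q ω)
      = ∑ p, ∑ q, A p * B q * covRV (U p) (V q) := by
  unfold covRV
  have i1 : ∫ ω, (∑ p, A p * U p ω) * (∑ q, B q * V q ω)
      = ∑ p, ∑ q, A p * B q * ∫ ω, U p ω * V q ω := by
    have e1 : (fun ω => (∑ p, A p * U p ω) * (∑ q, B q * V q ω))
        = fun ω => ∑ p, ∑ q, A p * B q * (U p ω * V q ω) := by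
      funext ω
      rw [Finset.sum_mul_sum]
      exact Finset.sum_congr rfl fun p _ => Finset.sum_congr rfl fun q _ => by ring
    rw [e1, integral_finset_sum _ fun p _ => integrable_finset_sum _ fun q _ =>
      (l2_integrable_mul (hU p) (hV q)).const_mul _]
    refine Finset.sum_congr rfl fun p _ => ?_
    rw [integral_finset_sum _ fun q _ => (l2_integrable_mul (hU p) (hV q)).const_mul _]
    exact Finset.sum_congr rfl fun q _ => integral_const_mul _ _
  have i2 : ∫ ω, (∑ p, A p * U p ω) = ∑ p, A p * ∫ ω, U p ω := by
    rw [integral_finset_sum _ fun p _ => (l2_integrable (hU p)).const_mul _]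
    exact Finset.sum_congr rfl fun p _ => integral_const_mul _ _
  have i3 : ∫ ω, (∑ q, B q * V q ω) = ∑ q, B q * ∫ ω, V q ω := by
    rw [integral_finset_sum _ fun q _ => (l2_integrable (hV q)).const_mul _]
    exact Finset.sum_congr rfl fun q _ => integral_const_mul _ _
  rw [i1, i2, i3, Finset.sum_mul_sum, ← Finset.sum_sub_distrib]
  refine Finset.sum_congr rfl fun p _ => ?_
  rw [← Finset.sum_sub_distrib]
  exact Finset.sum_congr rfl fun q _ => by ring

open Filter in
/-- Truncation: covariance positivity for bounded monotone test functions extends to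
monotone `L²` test functions. -/
lemma covRV_nonneg_of_monotone {ι κ : Type*} {Y : Ω → ι → ℝ} {Z : Ω → κ → ℝ}
    (hPA : ∀ (f : (ι → ℝ) → ℝ) (g : (κ → ℝ) → ℝ),
      (∃ C, ∀ x, |f x| ≤ C) → (∃ C, ∀ x, |g x| ≤ C) → Monotone f → Monotone g →
      0 ≤ covRV (fun ω => f (Y ω)) (fun ω => g (Z ω)))
    {F : (ι → ℝ) → ℝ} {G : (κ → ℝ) → ℝ} (hF : Monotone F) (hG : Monotone G)
    (hFY : MemLp (fun ω => F (Y ω)) 2 volume) (hGZ : MemLp (fun ω => G (Z ω)) 2 volume) :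
    0 ≤ covRV (fun ω => F (Y ω)) (fun ω => G (Z ω)) := by
  set clamp : ℕ → ℝ → ℝ := fun n t => max (-(n:ℝ)) (min t n) with hclamp
  have clamp_mono : ∀ n, Monotone (clamp n) :=
    fun n => monotone_const.max (monotone_id.min monotone_const)
  have clamp_cont : ∀ n, Continuous (clamp n) :=
    fun n => continuous_const.max (continuous_id.min continuous_const)
  have clamp_abs_le : ∀ (n : ℕ) (t : ℝ), |clamp n t| ≤ |t| := by
    intro n t
    refine abs_le.2 ⟨?_, ?_⟩
    · exact le_trans (le_min (neg_abs_le t)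
        (le_trans (neg_nonpos.2 (abs_nonneg t)) (Nat.cast_nonneg n))) (le_max_right _ _)
    · exact max_le (le_trans (by simp [neg_nonpos]) (abs_nonneg t))
        ((min_le_left t n).trans (le_abs_self t))
  have clamp_bdd : ∀ (n : ℕ) (t : ℝ), |clamp n t| ≤ (n : ℝ) := fun n t =>
    abs_le.2 ⟨le_max_left _ _, max_le (by simp [neg_nonpos]) (min_le_right t n)⟩
  have clamp_tendsto : ∀ t : ℝ, Tendsto (fun n => clamp n t) atTop (nhds t) := by
    intro t
    refine tendsto_const_nhds.congr' ?_
    rw [EventuallyEq, eventually_atTop]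
    refine ⟨⌈|t|⌉₊, fun n hn => ?_⟩
    have h : |t| ≤ (n : ℝ) := (Nat.le_ceil _).trans (Nat.cast_le.2 hn)
    have h1 : t ≤ (n : ℝ) := (le_abs_self t).trans h
    have h2 : -(n : ℝ) ≤ t := by
      have := neg_abs_le t; linarith
    simp [hclamp, min_eq_left h1, max_eq_right h2]
  set FY : Ω → ℝ := fun ω => F (Y ω) with hFYdef
  set GZ : Ω → ℝ := fun ω => G (Z ω) with hGZdef
  have hFYm : AEStronglyMeasurable FY volume := hFY.aestronglyMeasurable
  have hGZm : AEStronglyMeasurable GZ volume := hGZ.aestronglyMeasurable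
  have hFnm : ∀ n : ℕ, AEStronglyMeasurable (fun ω => clamp n (FY ω)) volume :=
    fun n => (clamp_cont n).comp_aestronglyMeasurable hFYm
  have hGnm : ∀ n : ℕ, AEStronglyMeasurable (fun ω => clamp n (GZ ω)) volume :=
    fun n => (clamp_cont n).comp_aestronglyMeasurable hGZm
  have hpos : ∀ n : ℕ, 0 ≤ covRV (fun ω => clamp n (FY ω)) (fun ω => clamp n (GZ ω)) := by
    intro n
    exact hPA (fun x => clamp n (F x)) (fun x => clamp n (G x))
      ⟨n, fun x => clamp_bdd n _⟩ ⟨n, fun x => clamp_bdd n _⟩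
      ((clamp_mono n).comp hF) ((clamp_mono n).comp hG)
  have hFint : Integrable FY := hFY.integrable one_le_two
  have hGint : Integrable GZ := hGZ.integrable one_le_two
  have habsint : Integrable (fun ω => |FY ω| * |GZ ω|) := by
    have h2 : MemLp (fun ω => |FY ω|) 2 volume := by
      simpa [Real.norm_eq_abs] using hFY.norm
    have h3 : MemLp (fun ω => |GZ ω|) 2 volume := by
      simpa [Real.norm_eq_abs] using hGZ.norm
    exact l2_integrable_mul h2 h3
  have t1 : Tendsto (fun n : ℕ => ∫ ω, clamp n (FY ω) * clamp n (GZ ω)) atTop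
      (nhds (∫ ω, FY ω * GZ ω)) := by
    refine tendsto_integral_of_dominated_convergence (fun ω => |FY ω| * |GZ ω|)
      (fun n => (hFnm n).mul (hGnm n)) habsint ?_ ?_
    · intro n
      filter_upwards with ω
      rw [Real.norm_eq_abs, abs_mul]
      exact mul_le_mul (clamp_abs_le n _) (clamp_abs_le n _) (abs_nonneg _) (abs_nonneg _)
    · filter_upwards with ω
      exact (clamp_tendsto (FY ω)).mul (clamp_tendsto (GZ ω))
  have t2 : Tendsto (fun n : ℕ => ∫ ω, clamp n (FY ω)) atTop (nhds (∫ ω, FY ω)) := by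
    refine tendsto_integral_of_dominated_convergence (fun ω => |FY ω|)
      (fun n => hFnm n) hFint.abs ?_ ?_
    · intro n; filter_upwards with ω; rw [Real.norm_eq_abs]; exact clamp_abs_le n _
    · filter_upwards with ω; exact clamp_tendsto (FY ω)
  have t3 : Tendsto (fun n : ℕ => ∫ ω, clamp n (GZ ω)) atTop (nhds (∫ ω, GZ ω)) := by
    refine tendsto_integral_of_dominated_convergence (fun ω => |GZ ω|)
      (fun n => hGnm n) hGint.abs ?_ ?_
    · intro n; filter_upwards with ω; rw [Real.norm_eq_abs]; exact clamp_abs_le n _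
    · filter_upwards with ω; exact clamp_tendsto (GZ ω)
  have tcov : Tendsto (fun n : ℕ => covRV (fun ω => clamp n (FY ω)) (fun ω => clamp n (GZ ω)))
      atTop (nhds (covRV FY GZ)) := by
    unfold covRV
    exact t1.sub (t2.mul t3)
  exact ge_of_tendsto' tcov hpos

/-- An `ℓ¹`-Lipschitz function of an `L²` random vector is in `L²`. -/
lemma memL2_comp_coordLip {ι : Type*} [Fintype ι] [DecidableEq ι] {L : ι → ℝ}
    {f : (ι → ℝ) → ℝ} (hL : ∀ p, 0 ≤ L p) (hf : CoordLip L f)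
    (Y : Ω → ι → ℝ) (hYmeas : Measurable Y)
    (hY2 : ∀ p, MemLp (fun ω => Y ω p) 2 volume) :
    MemLp (fun ω => f (Y ω)) 2 volume := by
  refine MemLp.of_le (g := fun ω => |f 0| + ∑ p, L p * |Y ω p|) ?_ ?_ ?_
  · refine (memLp_const (|f 0|)).add (memLp_finset_sum Finset.univ fun p _ => ?_)
    have hn : MemLp (fun ω => |Y ω p|) 2 volume := by
      simpa [Real.norm_eq_abs] using (hY2 p).norm
    exact hn.const_mul (L p)
  · exact (coordLip_continuous hL hf).comp_aestronglyMeasurable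
      hYmeas.aestronglyMeasurable
  · filter_upwards with ω
    simp only [Real.norm_eq_abs]
    have h := coordLip_abs_le hf (Y ω) 0
    simp only [Pi.zero_apply, sub_zero] at h
    have h1 : |f (Y ω)| ≤ |f 0| + ∑ p, L p * |Y ω p| := by
      calc |f (Y ω)| ≤ |f (Y ω) - f 0| + |f 0| := by
            have := abs_sub_le (f (Y ω)) (f 0) 0; simpa using this
        _ ≤ (∑ p, L p * |Y ω p|) + |f 0| := by linarith
        _ = |f 0| + ∑ p, L p * |Y ω p| := by ring
    exact h1.trans (le_abs_self _)
end Cov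

/-- Every positively associated `ℝ^s`-valued random field with finite second moments
is quasi-associated. -/
theorem stmt11 {Ω : Type*} [MeasureSpace Ω] [IsProbabilityMeasure (volume : Measure Ω)]
    {T : Type*} [DecidableEq T] (s : ℕ) (X : T → Ω → Fin s → ℝ)
    (hmeas : ∀ t k, Measurable fun ω => X t ω k)
    (hmom : ∀ t k, Integrable (fun ω => (X t ω k) ^ 2) (volume : Measure Ω))
    (hPA : PA s X) :
    QA s X := by
  intro I J f g Lf Lg hLf0 hLg0 hf hg
  -- the two random vectors
  have hY2 : ∀ p : ↥I × Fin s, MemLp (fun ω => X p.1.1 ω p.2) 2 volume := fun p =>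
    (memLp_two_iff_integrable_sq (hmeas p.1.1 p.2).aestronglyMeasurable).2 (hmom p.1.1 p.2)
  have hZ2 : ∀ q : ↥J × Fin s, MemLp (fun ω => X q.1.1 ω q.2) 2 volume := fun q =>
    (memLp_two_iff_integrable_sq (hmeas q.1.1 q.2).aestronglyMeasurable).2 (hmom q.1.1 q.2)
  have hYmeas : Measurable (fun ω (p : ↥I × Fin s) => X p.1.1 ω p.2) :=
    measurable_pi_lambda _ fun p => hmeas p.1.1 p.2
  have hZmeas : Measurable (fun ω (q : ↥J × Fin s) => X q.1.1 ω q.2) :=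
    measurable_pi_lambda _ fun q => hmeas q.1.1 q.2
  -- L² facts
  have hfY : MemLp (fun ω => f fun p => X p.1.1 ω p.2) 2 volume :=
    memL2_comp_coordLip hLf0 hf _ hYmeas hY2
  have hgZ : MemLp (fun ω => g fun q => X q.1.1 ω q.2) 2 volume :=
    memL2_comp_coordLip hLg0 hg _ hZmeas hZ2
  have hfsY : MemLp (fun ω => ∑ p : ↥I × Fin s, Lf p * X p.1.1 ω p.2) 2 volume :=
    memLp_finset_sum Finset.univ fun p _ => (hY2 p).const_mul _
  have hgsZ : MemLp (fun ω => ∑ q : ↥J × Fin s, Lg q * X q.1.1 ω q.2) 2 volume :=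
    memLp_finset_sum Finset.univ fun q _ => (hZ2 q).const_mul _
  -- monotone versions
  have hfneg : CoordLip Lf (fun x => -f x) := by
    intro p x y h
    have h2 : (-f x) - (-f y) = -(f x - f y) := by ring
    rw [h2, abs_neg]
    exact hf p x y h
  have hgneg : CoordLip Lg (fun x => -g x) := by
    intro q x y h
    have h2 : (-g x) - (-g y) = -(g x - g y) := by ring
    rw [h2, abs_neg]
    exact hg q x y h
  have hmF : Monotone (fun x : ↥I × Fin s → ℝ => f x + ∑ p, Lf p * x p) :=
    coordLip_monotone hLf0 hf
  have hmF2 : Monotone (fun x : ↥I × Fin s → ℝ => -f x + ∑ p, Lf p * x p) :=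
    coordLip_monotone hLf0 hfneg
  have hmG : Monotone (fun x : ↥J × Fin s → ℝ => g x + ∑ q, Lg q * x q) :=
    coordLip_monotone hLg0 hg
  have hmG2 : Monotone (fun x : ↥J × Fin s → ℝ => -g x + ∑ q, Lg q * x q) :=
    coordLip_monotone hLg0 hgneg
  -- key: PA for monotone L² functions
  have key : ∀ (F : (↥I × Fin s → ℝ) → ℝ) (G : (↥J × Fin s → ℝ) → ℝ), Monotone F →
      Monotone G → MemLp (fun ω => F fun p => X p.1.1 ω p.2) 2 volume →
      MemLp (fun ω => G fun q => X q.1.1 ω q.2) 2 volume →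
      0 ≤ covRV (fun ω => F fun p => X p.1.1 ω p.2) (fun ω => G fun q => X q.1.1 ω q.2) :=
    fun F G hmFa hmGa h1 h2 =>
      covRV_nonneg_of_monotone (Y := fun ω (p : ↥I × Fin s) => X p.1.1 ω p.2)
        (Z := fun ω (q : ↥J × Fin s) => X q.1.1 ω q.2) (hPA I J) hmFa hmGa h1 h2
  -- the four covariance inequalities, beta-reduced
  have A1 : 0 ≤ covRV
      (fun ω => f (fun p => X p.1.1 ω p.2) + ∑ p : ↥I × Fin s, Lf p * X p.1.1 ω p.2)
      (fun ω => g (fun q => X q.1.1 ω q.2) + ∑ q : ↥J × Fin s, Lg q * X q.1.1 ω q.2) :=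
    key _ _ hmF hmG (hfY.add hfsY) (hgZ.add hgsZ)
  have A2 : 0 ≤ covRV
      (fun ω => -f (fun p => X p.1.1 ω p.2) + ∑ p : ↥I × Fin s, Lf p * X p.1.1 ω p.2)
      (fun ω => -g (fun q => X q.1.1 ω q.2) + ∑ q : ↥J × Fin s, Lg q * X q.1.1 ω q.2) :=
    key _ _ hmF2 hmG2 (hfY.neg.add hfsY) (hgZ.neg.add hgsZ)
  have A3 : 0 ≤ covRV
      (fun ω => f (fun p => X p.1.1 ω p.2) + ∑ p : ↥I × Fin s, Lf p * X p.1.1 ω p.2)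
      (fun ω => -g (fun q => X q.1.1 ω q.2) + ∑ q : ↥J × Fin s, Lg q * X q.1.1 ω q.2) :=
    key _ _ hmF hmG2 (hfY.add hfsY) (hgZ.neg.add hgsZ)
  have A4 : 0 ≤ covRV
      (fun ω => -f (fun p => X p.1.1 ω p.2) + ∑ p : ↥I × Fin s, Lf p * X p.1.1 ω p.2)
      (fun ω => g (fun q => X q.1.1 ω q.2) + ∑ q : ↥J × Fin s, Lg q * X q.1.1 ω q.2) :=
    key _ _ hmF2 hmG (hfY.neg.add hfsY) (hgZ.add hgsZ)
  -- expand them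
  have E : ∀ a b : ℝ, covRV
      (fun ω => a * f (fun p => X p.1.1 ω p.2) + ∑ p : ↥I × Fin s, Lf p * X p.1.1 ω p.2)
      (fun ω => b * g (fun q => X q.1.1 ω q.2) + ∑ q : ↥J × Fin s, Lg q * X q.1.1 ω q.2)
      = a * b * covRV (fun ω => f fun p => X p.1.1 ω p.2) (fun ω => g fun q => X q.1.1 ω q.2)
      + a * covRV (fun ω => f fun p => X p.1.1 ω p.2)
          (fun ω => ∑ q : ↥J × Fin s, Lg q * X q.1.1 ω q.2)
      + b * covRV (fun ω => ∑ p : ↥I × Fin s, Lf p * X p.1.1 ω p.2)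
          (fun ω => g fun q => X q.1.1 ω q.2)
      + covRV (fun ω => ∑ p : ↥I × Fin s, Lf p * X p.1.1 ω p.2)
          (fun ω => ∑ q : ↥J × Fin s, Lg q * X q.1.1 ω q.2) := by
    intro a b
    have h := covRV_expand (u := fun ω => f fun p => X p.1.1 ω p.2)
      (u' := fun ω => ∑ p : ↥I × Fin s, Lf p * X p.1.1 ω p.2)
      (v := fun ω => g fun q => X q.1.1 ω q.2)
      (v' := fun ω => ∑ q : ↥J × Fin s, Lg q * X q.1.1 ω q.2)
      a 1 b 1 hfY hfsY hgZ hgsZ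
    simp only [one_mul, mul_one] at h
    rw [h]
  have E1 := E 1 1
  have E2 := E (-1) (-1)
  have E3 := E 1 (-1)
  have E4 := E (-1) 1
  simp only [one_mul, neg_one_mul, neg_mul, neg_neg, mul_one] at E1 E2 E3 E4
  rw [E1] at A1
  rw [E2] at A2
  rw [E3] at A3
  rw [E4] at A4
  -- conclude |cov| ≤ cov of the linear parts
  have hub : covRV (fun ω => f fun p => X p.1.1 ω p.2) (fun ω => g fun q => X q.1.1 ω q.2)
      ≤ covRV (fun ω => ∑ p : ↥I × Fin s, Lf p * X p.1.1 ω p.2)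
        (fun ω => ∑ q : ↥J × Fin s, Lg q * X q.1.1 ω q.2) := by linarith
  have hlb : -covRV (fun ω => ∑ p : ↥I × Fin s, Lf p * X p.1.1 ω p.2)
        (fun ω => ∑ q : ↥J × Fin s, Lg q * X q.1.1 ω q.2)
      ≤ covRV (fun ω => f fun p => X p.1.1 ω p.2) (fun ω => g fun q => X q.1.1 ω q.2) := by
    linarith
  have habs : |covRV (fun ω => f fun p => X p.1.1 ω p.2) (fun ω => g fun q => X q.1.1 ω q.2)|
      ≤ |covRV (fun ω => ∑ p : ↥I × Fin s, Lf p * X p.1.1 ω p.2)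
        (fun ω => ∑ q : ↥J × Fin s, Lg q * X q.1.1 ω q.2)| := by
    rw [abs_le]
    constructor
    · linarith [le_abs_self (covRV (fun ω => ∑ p : ↥I × Fin s, Lf p * X p.1.1 ω p.2)
        (fun ω => ∑ q : ↥J × Fin s, Lg q * X q.1.1 ω q.2))]
    · linarith [le_abs_self (covRV (fun ω => ∑ p : ↥I × Fin s, Lf p * X p.1.1 ω p.2)
        (fun ω => ∑ q : ↥J × Fin s, Lg q * X q.1.1 ω q.2))]
  -- expand the linear part as a double sum
  have ES : covRV (fun ω => ∑ p : ↥I × Fin s, Lf p * X p.1.1 ω p.2)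
      (fun ω => ∑ q : ↥J × Fin s, Lg q * X q.1.1 ω q.2)
      = ∑ p : ↥I × Fin s, ∑ q : ↥J × Fin s,
        Lf p * Lg q * covRV (fun ω => X p.1.1 ω p.2) (fun ω => X q.1.1 ω q.2) :=
    covRV_sum_sum Lf Lg (fun p ω => X p.1.1 ω p.2) (fun q ω => X q.1.1 ω q.2) hY2 hZ2
  refine habs.trans ?_
  rw [ES]
  refine (Finset.abs_sum_le_sum_abs _ _).trans ?_
  refine Finset.sum_le_sum fun p _ => ?_
  refine (Finset.abs_sum_le_sum_abs _ _).trans ?_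
  refine Finset.sum_le_sum fun q _ => ?_
  rw [abs_mul, abs_of_nonneg (mul_nonneg (hLf0 p) (hLg0 q))]
end

section
/- Discretization preserves BL(θ)-dependence with a shift: if (X(t))_{t∈ℝ^d} is BL(θ)-dependent, then for each n ∈ ℕ the field Z_n(j) := n^{−d} Σ_{k₁,…,k_d=1}^n X(j₁+k₁/n, …, j_d+k_d/n) − E X(0), j ∈ ℤ^d, is BL(θ')-dependent over ℤ^d with θ'_r := θ_{r−d} (for r > d). -/
open MeasureTheory Filter Topology

/-- `f` is Lipschitz with constant `K` with respect to the `ℓ¹`-norm. -/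
def LipL1 {ι : Type*} [Fintype ι] (K : ℝ) (f : (ι → ℝ) → ℝ) : Prop :=
  ∀ x y : ι → ℝ, |f x - f y| ≤ K * ∑ i, |x i - y i|

/-- `BL(θ)`-dependence of a real-valued random field over `ℝ^d`. -/
def BLdepR {Ω : Type*} [MeasureSpace Ω] (d : ℕ) (θ : ℕ → ℝ)
    (X : (Fin d → ℝ) → Ω → ℝ) : Prop :=
  ∀ (Δ : ℝ), 1 < Δ →
  ∀ I J : Finset (Fin d → ℝ),
    (∀ x ∈ I, ∀ i, ∃ z : ℤ, x i = z / Δ) →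
    (∀ x ∈ J, ∀ i, ∃ z : ℤ, x i = z / Δ) →
    Disjoint I J →
  ∀ r : ℕ, (∀ x ∈ I, ∀ y ∈ J, (r : ℝ) ≤ ∑ i, |x i - y i|) →
  ∀ (f : (↥I → ℝ) → ℝ) (g : (↥J → ℝ) → ℝ),
    (∃ C, ∀ x, |f x| ≤ C) → (∃ C, ∀ x, |g x| ≤ C) →
  ∀ Kf Kg : ℝ, 0 ≤ Kf → 0 ≤ Kg → LipL1 Kf f → LipL1 Kg g →
    covRV (fun ω => f fun t => X t.1 ω) (fun ω => g fun t => X t.1 ω) ≤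
      (min I.card J.card : ℕ) * Kf * Kg * Δ ^ d * θ r

/-- The discretized field `Z_n(j) = n^{-d} Σ_{k₁,…,k_d=1}^n X(j + k/n) − E X 0`. -/
noncomputable def Zdiscr {Ω : Type*} [MeasureSpace Ω] (d : ℕ)
    (X : (Fin d → ℝ) → Ω → ℝ) (n : ℕ) (j : Fin d → ℤ) (ω : Ω) : ℝ :=
  (n : ℝ) ^ (-(d : ℤ)) *
    (∑ k : Fin d → Fin n, X (fun i => (j i : ℝ) + ((k i : ℝ) + 1) / n) ω) -
  ∫ ω', X 0 ω'

namespace Stmt16Aux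

/-- The shift map `(j, k) ↦ j + (k+1)/n`. -/
noncomputable def phi (d n : ℕ) (p : (Fin d → ℤ) × (Fin d → Fin n)) : Fin d → ℝ :=
  fun i => (p.1 i : ℝ) + ((p.2 i : ℝ) + 1) / n

lemma coordEq {n : ℕ} (hn : 0 < n) (a b : ℤ) (u v : Fin n)
    (h : (a : ℝ) + ((u : ℝ) + 1) / n = (b : ℝ) + ((v : ℝ) + 1) / n) :
    a * n + (u : ℤ) = b * n + (v : ℤ) := by
  have hn' : (n : ℝ) ≠ 0 := by
    exact_mod_cast hn.ne'
  have e : ((a * n + (u : ℤ) : ℤ) : ℝ) = ((b * n + (v : ℤ) : ℤ) : ℝ) := by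
    push_cast
    field_simp at h ⊢
    linarith
  exact_mod_cast e

lemma euclid_unique {n a b u v : ℤ} (hn : 0 < n) (hu : 0 ≤ u) (hu' : u < n)
    (hv : 0 ≤ v) (hv' : v < n) (h : a * n + u = b * n + v) : a = b ∧ u = v := by
  have ha : a = b := by
    rcases lt_trichotomy a b with hab | hab | hab
    · exfalso
      have := mul_le_mul_of_nonneg_right (Int.add_one_le_iff.mpr hab) hn.le
      linarith
    · exact hab
    · exfalso
      have := mul_le_mul_of_nonneg_right (Int.add_one_le_iff.mpr hab) hn.le
      linarith
  subst ha
  exact ⟨rfl, by linarith⟩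

lemma euclid_unique' {d n : ℕ} (hn : 0 < n) (p q : (Fin d → ℤ) × (Fin d → Fin n)) (i : Fin d)
    (h : p.1 i * n + ((p.2 i : ℕ) : ℤ) = q.1 i * n + ((q.2 i : ℕ) : ℤ)) :
    p.1 i = q.1 i ∧ ((p.2 i : ℕ) : ℤ) = ((q.2 i : ℕ) : ℤ) := by
  have hnZ : (0 : ℤ) < n := by exact_mod_cast hn
  have b1 : ((p.2 i : ℕ) : ℤ) < n := by exact_mod_cast (p.2 i).isLt
  have b2 : ((q.2 i : ℕ) : ℤ) < n := by exact_mod_cast (q.2 i).isLt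
  exact euclid_unique hnZ (by positivity) b1 (by positivity) b2 h

lemma phi_inj {d n : ℕ} (hn : 0 < n) : Function.Injective (phi d n) := by
  intro p q h
  have h' : ∀ i, p.1 i * n + ((p.2 i : ℕ) : ℤ) = q.1 i * n + ((q.2 i : ℕ) : ℤ) := by
    intro i
    exact coordEq hn _ _ _ _ (congrFun h i)
  have e1 : p.1 = q.1 := funext fun i => (euclid_unique' hn p q i (h' i)).1
  have e2 : p.2 = q.2 := funext fun i =>
    Fin.ext (by exact_mod_cast (euclid_unique' hn p q i (h' i)).2)
  exact Prod.ext e1 e2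

lemma shift_mem_unit {n : ℕ} (hn : 0 < n) (u : Fin n) :
    0 ≤ ((u : ℝ) + 1) / n ∧ ((u : ℝ) + 1) / n ≤ 1 := by
  have hn0 : (0 : ℝ) < n := by exact_mod_cast hn
  constructor
  · positivity
  · rw [div_le_one hn0]
    have : ((u : ℕ) : ℝ) + 1 ≤ n := by
      have := u.isLt
      exact_mod_cast this
    exact this

lemma phi_dist {d n : ℕ} (hn : 0 < n) (p q : (Fin d → ℤ) × (Fin d → Fin n)) (i : Fin d) :
    |(p.1 i : ℝ) - (q.1 i : ℝ)| - 1 ≤ |phi d n p i - phi d n q i| := by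
  obtain ⟨ha0, ha1⟩ := shift_mem_unit hn (p.2 i)
  obtain ⟨hb0, hb1⟩ := shift_mem_unit hn (q.2 i)
  set a := ((p.2 i : ℝ) + 1) / n with hadef
  set b := ((q.2 i : ℝ) + 1) / n with hbdef
  have hab : |b - a| ≤ 1 := by
    rw [abs_le]; constructor <;> linarith
  have key : |(p.1 i : ℝ) - (q.1 i : ℝ)| ≤ |phi d n p i - phi d n q i| + |b - a| := by
    have : (p.1 i : ℝ) - (q.1 i : ℝ) = (phi d n p i - phi d n q i) + (b - a) := by
      simp only [phi, hadef, hbdef]; ring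
    rw [this]
    exact abs_add_le _ _
  linarith

end Stmt16Aux

open Stmt16Aux in
/-- Discretization preserves `BL(θ)`-dependence with a shift: if `(X t)_{t∈ℝ^d}` is
`BL(θ)`-dependent, then the discretized field `Z_n` is `BL(θ')`-dependent over `ℤ^d`
with `θ'_r = θ_{r−d}` (for `r > d`). -/
theorem stmt16 {Ω : Type*} [MeasureSpace Ω] [IsProbabilityMeasure (volume : Measure Ω)]
    (d : ℕ) (θ : ℕ → ℝ) (hθ : Antitone θ) (hθ0 : Tendsto θ atTop (𝓝 0))
    (X : (Fin d → ℝ) → Ω → ℝ) (hBL : BLdepR d θ X) (n : ℕ) (hn : 1 < n) :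
    ∀ I J : Finset (Fin d → ℤ), Disjoint I J →
    ∀ r : ℕ, d < r →
      (∀ x ∈ I, ∀ y ∈ J, (r : ℝ) ≤ ∑ i, |(x i : ℝ) - (y i : ℝ)|) →
    ∀ (f : (↥I → ℝ) → ℝ) (g : (↥J → ℝ) → ℝ),
      (∃ C, ∀ x, |f x| ≤ C) → (∃ C, ∀ x, |g x| ≤ C) →
    ∀ Kf Kg : ℝ, 0 ≤ Kf → 0 ≤ Kg → LipL1 Kf f → LipL1 Kg g →
      covRV (fun ω => f fun t => Zdiscr d X n t.1 ω)
            (fun ω => g fun t => Zdiscr d X n t.1 ω) ≤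
        (min I.card J.card : ℕ) * Kf * Kg * θ (r - d) := by
  intro I J hIJ r hdr hr f g hfC hgC Kf Kg hKf hKg hf hg
  have hn0 : 0 < n := Nat.lt_of_lt_of_le Nat.one_pos hn.le
  have hnR : (0 : ℝ) < n := by exact_mod_cast hn0
  have hnR1 : (1 : ℝ) < n := by exact_mod_cast hn
  set c : ℝ := (n : ℝ) ^ (-(d : ℤ)) with hcdef
  have hc0 : 0 ≤ c := by positivity
  -- the discretized index sets
  set ITil : Finset (Fin d → ℝ) := (I ×ˢ (Finset.univ : Finset (Fin d → Fin n))).image (phi d n) with hITil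
  set JTil : Finset (Fin d → ℝ) := (J ×ˢ (Finset.univ : Finset (Fin d → Fin n))).image (phi d n) with hJTil
  have memI : ∀ (j : ↥I) (k : Fin d → Fin n), phi d n (j.1, k) ∈ ITil := by
    intro j k
    exact Finset.mem_image.mpr ⟨(j.1, k), Finset.mem_product.mpr ⟨j.2, Finset.mem_univ _⟩, rfl⟩
  have memJ : ∀ (j : ↥J) (k : Fin d → Fin n), phi d n (j.1, k) ∈ JTil := by
    intro j k
    exact Finset.mem_image.mpr ⟨(j.1, k), Finset.mem_product.mpr ⟨j.2, Finset.mem_univ _⟩, rfl⟩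
  -- grid conditions
  have hgrid : ∀ (p : (Fin d → ℤ) × (Fin d → Fin n)) (i : Fin d),
      ∃ z : ℤ, phi d n p i = z / (n : ℝ) := by
    intro p i
    refine ⟨p.1 i * n + (p.2 i : ℤ) + 1, ?_⟩
    simp only [phi]
    push_cast
    field_simp
    ring
  have hgridI : ∀ x ∈ ITil, ∀ i, ∃ z : ℤ, x i = z / (n : ℝ) := by
    intro x hx i
    obtain ⟨p, _, rfl⟩ := Finset.mem_image.mp hx
    exact hgrid p i
  have hgridJ : ∀ x ∈ JTil, ∀ i, ∃ z : ℤ, x i = z / (n : ℝ) := by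
    intro x hx i
    obtain ⟨p, _, rfl⟩ := Finset.mem_image.mp hx
    exact hgrid p i
  -- disjointness
  have hdisj : Disjoint ITil JTil := by
    rw [Finset.disjoint_left]
    intro t htI htJ
    obtain ⟨p, hp, hpt⟩ := Finset.mem_image.mp htI
    obtain ⟨q, hq, hqt⟩ := Finset.mem_image.mp htJ
    have hpI : p.1 ∈ I := (Finset.mem_product.mp hp).1
    have hqJ : q.1 ∈ J := (Finset.mem_product.mp hq).1
    have hφ : phi d n p = phi d n q := by rw [hpt, hqt]
    have h' : ∀ i, p.1 i = q.1 i := by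
      intro i
      exact (euclid_unique' hn0 p q i (coordEq hn0 _ _ _ _ (congrFun hφ i))).1
    have hsum : ∑ i, |(p.1 i : ℝ) - (q.1 i : ℝ)| = 0 := by
      apply Finset.sum_eq_zero
      intro i _
      rw [h' i]
      simp
    have := hr p.1 hpI q.1 hqJ
    rw [hsum] at this
    have hrpos : (0 : ℝ) < r := by
      have : 0 < r := Nat.lt_of_le_of_lt (Nat.zero_le d) hdr
      exact_mod_cast this
    linarith
  -- distance condition
  have hdist : ∀ x ∈ ITil, ∀ y ∈ JTil, ((r - d : ℕ) : ℝ) ≤ ∑ i, |x i - y i| := by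
    intro x hx y hy
    obtain ⟨p, hp, rfl⟩ := Finset.mem_image.mp hx
    obtain ⟨q, hq, rfl⟩ := Finset.mem_image.mp hy
    have hpI : p.1 ∈ I := (Finset.mem_product.mp hp).1
    have hqJ : q.1 ∈ J := (Finset.mem_product.mp hq).1
    have h1 : ∑ i, (|(p.1 i : ℝ) - (q.1 i : ℝ)| - 1) ≤ ∑ i, |phi d n p i - phi d n q i| :=
      Finset.sum_le_sum fun i _ => phi_dist hn0 p q i
    have h2 : ∑ i, (|(p.1 i : ℝ) - (q.1 i : ℝ)| - 1)
        = (∑ i, |(p.1 i : ℝ) - (q.1 i : ℝ)|) - d := by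
      rw [Finset.sum_sub_distrib]
      simp
    have h3 := hr p.1 hpI q.1 hqJ
    have hcast : ((r - d : ℕ) : ℝ) = (r : ℝ) - d := by
      rw [Nat.cast_sub hdr.le]
    rw [hcast]
    linarith
  -- lifted functions
  set m : ℝ := ∫ ω', X 0 ω' with hmdef
  set e : ↥I × (Fin d → Fin n) → ↥ITil :=
    fun p => ⟨phi d n (p.1.1, p.2), memI p.1 p.2⟩ with hedef
  set e' : ↥J × (Fin d → Fin n) → ↥JTil :=
    fun p => ⟨phi d n (p.1.1, p.2), memJ p.1 p.2⟩ with he'def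
  have heinj : Function.Injective e := by
    intro p q h
    have := phi_inj hn0 (Subtype.ext_iff.mp h)
    have h1 : p.1.1 = q.1.1 := (Prod.ext_iff.mp this).1
    have h2 : p.2 = q.2 := (Prod.ext_iff.mp this).2
    exact Prod.ext (Subtype.ext h1) h2
  have he'inj : Function.Injective e' := by
    intro p q h
    have := phi_inj hn0 (Subtype.ext_iff.mp h)
    have h1 : p.1.1 = q.1.1 := (Prod.ext_iff.mp this).1
    have h2 : p.2 = q.2 := (Prod.ext_iff.mp this).2
    exact Prod.ext (Subtype.ext h1) h2
  set Ef : (↥ITil → ℝ) → ℝ :=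
    fun x => f (fun j => c * ∑ k : Fin d → Fin n, x (e (j, k)) - m) with hEfdef
  set Eg : (↥JTil → ℝ) → ℝ :=
    fun x => g (fun j => c * ∑ k : Fin d → Fin n, x (e' (j, k)) - m) with hEgdef
  -- boundedness
  have hEfC : ∃ C, ∀ x, |Ef x| ≤ C := by
    obtain ⟨C, hC⟩ := hfC
    exact ⟨C, fun x => hC _⟩
  have hEgC : ∃ C, ∀ x, |Eg x| ≤ C := by
    obtain ⟨C, hC⟩ := hgC
    exact ⟨C, fun x => hC _⟩
  -- sum reindexing inequality
  have hsumle : ∀ (S : Type) [Fintype S] (E : S → ↥ITil) (_ : Function.Injective E)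
      (F : ↥ITil → ℝ), (∀ t, 0 ≤ F t) → ∑ p : S, F (E p) ≤ ∑ t : ↥ITil, F t := by
    intro S _ E hE F hF
    calc ∑ p : S, F (E p) = ∑ t ∈ Finset.univ.image E, F t := by
          rw [Finset.sum_image (fun a _ b _ h => hE h)]
      _ ≤ ∑ t : ↥ITil, F t :=
          Finset.sum_le_sum_of_subset_of_nonneg (Finset.subset_univ _) (fun t _ _ => hF t)
  have hsumle' : ∀ (S : Type) [Fintype S] (E : S → ↥JTil) (_ : Function.Injective E)
      (F : ↥JTil → ℝ), (∀ t, 0 ≤ F t) → ∑ p : S, F (E p) ≤ ∑ t : ↥JTil, F t := by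
    intro S _ E hE F hF
    calc ∑ p : S, F (E p) = ∑ t ∈ Finset.univ.image E, F t := by
          rw [Finset.sum_image (fun a _ b _ h => hE h)]
      _ ≤ ∑ t : ↥JTil, F t :=
          Finset.sum_le_sum_of_subset_of_nonneg (Finset.subset_univ _) (fun t _ _ => hF t)
  -- Lipschitz
  have hLipEf : LipL1 (Kf * c) Ef := by
    intro x y
    calc |Ef x - Ef y|
        ≤ Kf * ∑ j : ↥I, |(c * ∑ k : Fin d → Fin n, x (e (j, k)) - m)
            - (c * ∑ k : Fin d → Fin n, y (e (j, k)) - m)| := hf _ _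
      _ ≤ Kf * ∑ j : ↥I, c * ∑ k : Fin d → Fin n, |x (e (j, k)) - y (e (j, k))| := by
          apply mul_le_mul_of_nonneg_left _ hKf
          apply Finset.sum_le_sum
          intro j _
          rw [show (c * ∑ k : Fin d → Fin n, x (e (j, k)) - m)
              - (c * ∑ k : Fin d → Fin n, y (e (j, k)) - m)
              = c * ∑ k : Fin d → Fin n, (x (e (j, k)) - y (e (j, k))) by
            rw [Finset.sum_sub_distrib]; ring]
          rw [abs_mul, abs_of_nonneg hc0]
          exact mul_le_mul_of_nonneg_left (Finset.abs_sum_le_sum_abs _ _) hc0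
      _ = Kf * c * ∑ p : ↥I × (Fin d → Fin n), |x (e p) - y (e p)| := by
          rw [Fintype.sum_prod_type, ← Finset.mul_sum, ← mul_assoc]
      _ ≤ Kf * c * ∑ t : ↥ITil, |x t - y t| := by
          apply mul_le_mul_of_nonneg_left _ (by positivity)
          exact hsumle _ e heinj (fun t => |x t - y t|) (fun t => abs_nonneg _)
  have hLipEg : LipL1 (Kg * c) Eg := by
    intro x y
    calc |Eg x - Eg y|
        ≤ Kg * ∑ j : ↥J, |(c * ∑ k : Fin d → Fin n, x (e' (j, k)) - m)
            - (c * ∑ k : Fin d → Fin n, y (e' (j, k)) - m)| := hg _ _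
      _ ≤ Kg * ∑ j : ↥J, c * ∑ k : Fin d → Fin n, |x (e' (j, k)) - y (e' (j, k))| := by
          apply mul_le_mul_of_nonneg_left _ hKg
          apply Finset.sum_le_sum
          intro j _
          rw [show (c * ∑ k : Fin d → Fin n, x (e' (j, k)) - m)
              - (c * ∑ k : Fin d → Fin n, y (e' (j, k)) - m)
              = c * ∑ k : Fin d → Fin n, (x (e' (j, k)) - y (e' (j, k))) by
            rw [Finset.sum_sub_distrib]; ring]
          rw [abs_mul, abs_of_nonneg hc0]
          exact mul_le_mul_of_nonneg_left (Finset.abs_sum_le_sum_abs _ _) hc0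
      _ = Kg * c * ∑ p : ↥J × (Fin d → Fin n), |x (e' p) - y (e' p)| := by
          rw [Fintype.sum_prod_type, ← Finset.mul_sum, ← mul_assoc]
      _ ≤ Kg * c * ∑ t : ↥JTil, |x t - y t| := by
          apply mul_le_mul_of_nonneg_left _ (by positivity)
          exact hsumle' _ e' he'inj (fun t => |x t - y t|) (fun t => abs_nonneg _)
  -- apply BL-dependence
  have hmain := hBL (n : ℝ) hnR1 ITil JTil hgridI hgridJ hdisj (r - d) hdist Ef Eg
    hEfC hEgC (Kf * c) (Kg * c) (by positivity) (by positivity) hLipEf hLipEg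
  -- identify the covariances
  have hcovf : (fun ω => f fun t => Zdiscr d X n t.1 ω) = fun ω => Ef fun t => X t.1 ω := rfl
  have hcovg : (fun ω => g fun t => Zdiscr d X n t.1 ω) = fun ω => Eg fun t => X t.1 ω := rfl
  rw [hcovf, hcovg]
  -- cards
  have hcardI : ITil.card = I.card * n ^ d := by
    rw [hITil, Finset.card_image_of_injective _ (phi_inj hn0), Finset.card_product,
      Finset.card_univ]
    simp
  have hcardJ : JTil.card = J.card * n ^ d := by
    rw [hJTil, Finset.card_image_of_injective _ (phi_inj hn0), Finset.card_product,
      Finset.card_univ]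
    simp
  have hmin : min ITil.card JTil.card = min I.card J.card * n ^ d := by
    rw [hcardI, hcardJ]
    rcases le_total I.card J.card with h | h
    · rw [min_eq_left (Nat.mul_le_mul_right _ h), min_eq_left h]
    · rw [min_eq_right (Nat.mul_le_mul_right _ h), min_eq_right h]
  have hrhs : ((min ITil.card JTil.card : ℕ) : ℝ) * (Kf * c) * (Kg * c) * (n : ℝ) ^ d * θ (r - d)
      = ((min I.card J.card : ℕ) : ℝ) * Kf * Kg * θ (r - d) := by
    rw [hmin]
    have hcval : c = ((n : ℝ) ^ d)⁻¹ := by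
      rw [hcdef, zpow_neg, zpow_natCast]
    have hnd : ((n : ℝ) ^ d) ≠ 0 := by positivity
    rw [hcval]
    push_cast
    generalize ((n : ℝ) ^ d) = N at hnd ⊢
    rw [show ∀ a x y z : ℝ, a * N * (x * N⁻¹) * (y * N⁻¹) * N * z
        = a * x * y * z * (N * N⁻¹) * (N * N⁻¹) from fun _ _ _ _ => by ring,
      mul_inv_cancel₀ hnd]
    ring
  rw [← hrhs]
  exact hmain
end
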